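/- Let G be a finite connected graph on n ≥ 2 vertices and 0 < r < 1. The expected absorption time τ of the Moran process on G (with uniformly random initial mutant) satisfies E[τ] ≤ n³/(1−r). -/

import Mathlib

open Finset

/-- Total fitness of the population when the mutant set is `S`:
`W(S) = r·|S| + (n - |S|) = n + (r-1)·|S|`. -/
noncomputable def moranW {V : Type*} [Fintype V] (r : ℝ) (S : Finset V) : ℝ :=
  r * S.card + ((Fintype.card V : ℝ) - S.card)

/-- One-step transition probability of the Moran process on the graph `G` with mutant
fitness `r`: an individual `x` is chosen with probability proportional to its fitness
(`r` if `x ∈ S`, else `1`), and it reproduces onto a uniformly random neighbour `y`,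
which becomes a mutant if `x` is a mutant and a non-mutant otherwise. -/
noncomputable def moranP {V : Type*} [Fintype V] [DecidableEq V] (G : SimpleGraph V)
    [DecidableRel G.Adj] (r : ℝ) (S T : Finset V) : ℝ :=
  ∑ x : V, ∑ y ∈ G.neighborFinset x,
    (if x ∈ S then r else 1) / (moranW r S * G.degree x) *
      (if (if x ∈ S then insert y S else S.erase y) = T then 1 else 0)

/-- The potential function `φ(X) = ∑_{x ∈ X} 1/deg x`. -/
noncomputable def moranPhi {V : Type*} [Fintype V] (G : SimpleGraph V) [DecidableRel G.Adj]
    (X : Finset V) : ℝ :=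
  ∑ x ∈ X, (1 : ℝ) / G.degree x

section moranAux

variable {V : Type*} [Fintype V] [DecidableEq V] (G : SimpleGraph V) [DecidableRel G.Adj]

lemma moranW_pos {r : ℝ} (hr0 : 0 < r) (hn : 1 ≤ Fintype.card V) (S : Finset V) :
    0 < moranW r S := by
  have hle : (S.card : ℝ) ≤ (Fintype.card V : ℝ) := by
    exact_mod_cast (S.card_le_univ).trans_eq Finset.card_univ
  have h1 : (0:ℝ) ≤ S.card := Nat.cast_nonneg _
  unfold moranW
  rcases eq_or_lt_of_le h1 with h0 | h0
  · have hn' : (1:ℝ) ≤ Fintype.card V := by exact_mod_cast hn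
    nlinarith
  · nlinarith [mul_pos hr0 h0]

lemma moranW_le {r : ℝ} (hr1 : r < 1) (S : Finset V) :
    moranW r S ≤ (Fintype.card V : ℝ) := by
  have h1 : (0:ℝ) ≤ S.card := Nat.cast_nonneg _
  unfold moranW
  nlinarith

lemma moranP_nonneg {r : ℝ} (hr0 : 0 < r) (hn : 1 ≤ Fintype.card V) (S T : Finset V) :
    0 ≤ moranP G r S T := by
  have hW := moranW_pos (V := V) hr0 hn S
  refine Finset.sum_nonneg fun x _ => Finset.sum_nonneg fun y _ => ?_
  have h1 : (0:ℝ) ≤ (if x ∈ S then r else 1) := by split_ifs; exact hr0.le; exact zero_le_one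
  have h2 : (0:ℝ) ≤ moranW r S * G.degree x := mul_nonneg hW.le (Nat.cast_nonneg _)
  have h3 : (0:ℝ) ≤ (if (if x ∈ S then insert y S else S.erase y) = T then (1:ℝ) else 0) := by
    split_ifs <;> norm_num
  exact mul_nonneg (div_nonneg h1 h2) h3

lemma moran_sum_apply (r : ℝ) (S : Finset V) (f : Finset V → ℝ) :
    ∑ T : Finset V, moranP G r S T * f T =
      ∑ x : V, ∑ y ∈ G.neighborFinset x,
        (if x ∈ S then r else 1) / (moranW r S * G.degree x) *
          f (if x ∈ S then insert y S else S.erase y) := by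
  unfold moranP
  simp only [Finset.sum_mul]
  rw [Finset.sum_comm]
  refine Finset.sum_congr rfl fun x _ => ?_
  rw [Finset.sum_comm]
  refine Finset.sum_congr rfl fun y _ => ?_
  simp only [ite_mul, one_mul, zero_mul, mul_ite, mul_zero]
  rw [Finset.sum_ite_eq]
  simp

lemma moran_csum {r : ℝ} (hr0 : 0 < r) (hn : 1 ≤ Fintype.card V)
    (hd : ∀ x, 0 < G.degree x) (S : Finset V) :
    ∑ x : V, ∑ _y ∈ G.neighborFinset x,
        (if x ∈ S then r else 1) / (moranW r S * G.degree x) = 1 := by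
  have hW := moranW_pos (V := V) hr0 hn S
  have step : ∀ x : V, (∑ _y ∈ G.neighborFinset x,
      (if x ∈ S then r else 1) / (moranW r S * G.degree x))
      = (if x ∈ S then r else 1) / moranW r S := by
    intro x
    rw [Finset.sum_const, nsmul_eq_mul, G.card_neighborFinset_eq_degree]
    have hdx : (G.degree x : ℝ) ≠ 0 := by
      exact_mod_cast (hd x).ne'
    field_simp
  simp only [step]
  rw [← Finset.sum_div]
  have hsum : ∑ x : V, (if x ∈ S then r else (1:ℝ)) = moranW r S := by
    have e : ∀ x : V, (if x ∈ S then r else (1:ℝ)) = (if x ∈ S then r - 1 else 0) + 1 := by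
      intro x; split_ifs <;> ring
    simp only [e]
    rw [Finset.sum_add_distrib, Finset.sum_const, Finset.sum_ite_mem, Finset.univ_inter,
      Finset.sum_const, Finset.card_univ]
    unfold moranW
    push_cast
    ring
  rw [hsum, div_self hW.ne']

lemma moran_rowsum {r : ℝ} (hr0 : 0 < r) (hn : 1 ≤ Fintype.card V)
    (hd : ∀ x, 0 < G.degree x) (S : Finset V) :
    ∑ T : Finset V, moranP G r S T = 1 := by
  have := moran_sum_apply G r S (fun _ => 1)
  simp only [mul_one] at this
  rw [this, moran_csum G hr0 hn hd S]

lemma moran_degree_pos (hG : G.Connected) (hn : 2 ≤ Fintype.card V) (x : V) :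
    0 < G.degree x := by
  have : Nontrivial V := Fintype.one_lt_card_iff_nontrivial.1 (by omega)
  obtain ⟨y, hy⟩ := exists_ne x
  obtain ⟨w⟩ := hG.preconnected x y
  cases w with
  | nil => exact absurd rfl hy
  | cons h p => exact (G.degree_pos_iff_exists_adj x).2 ⟨_, h⟩

lemma moran_boundary_of_walk {S : Finset V} :
    ∀ {a b : V}, G.Walk a b → a ∈ S → b ∉ S → ∃ u ∈ S, ∃ v, v ∉ S ∧ G.Adj u v := by
  intro a b w
  induction w with
  | nil => intro ha hb; exact absurd ha hb
  | @cons u v c hadj p ih =>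
    intro ha hb
    by_cases hv : v ∈ S
    · exact ih hv hb
    · exact ⟨u, ha, v, hv, hadj⟩

lemma moran_exists_boundary (hG : G.Connected) {S : Finset V} (hS0 : S ≠ ∅) (hS1 : S ≠ univ) :
    ∃ u ∈ S, ∃ v, v ∉ S ∧ G.Adj u v := by
  obtain ⟨a, ha⟩ := Finset.nonempty_of_ne_empty hS0
  obtain ⟨b, hb⟩ : ∃ b, b ∉ S := by
    by_contra hcon; push_neg at hcon
    exact hS1 (Finset.eq_univ_iff_forall.2 hcon)
  obtain ⟨w⟩ := hG.preconnected a b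
  exact moran_boundary_of_walk G w ha hb

lemma moran_drift (hG : G.Connected) (hn : 2 ≤ Fintype.card V) {r : ℝ}
    (hr0 : 0 < r) (hr1 : r < 1) (S : Finset V) (hS0 : S ≠ ∅) (hS1 : S ≠ univ) :
    ∑ T : Finset V, moranP G r S T * moranPhi G T ≤
      moranPhi G S - (1 - r) / (Fintype.card V : ℝ) ^ 3 := by
  have hn1 : 1 ≤ Fintype.card V := by omega
  have hd : ∀ x, 0 < G.degree x := moran_degree_pos G hG hn
  have hW := moranW_pos (V := V) hr0 hn1 S
  obtain ⟨u, hu, v, hv, huv⟩ := moran_exists_boundary G hG hS0 hS1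
  rw [moran_sum_apply]
  -- rewrite phi of the next state
  have hnext : ∀ x ∈ (univ : Finset V), ∀ y ∈ G.neighborFinset x,
      (if x ∈ S then r else 1) / (moranW r S * G.degree x) *
        moranPhi G (if x ∈ S then insert y S else S.erase y)
      = (if x ∈ S then r else 1) / (moranW r S * G.degree x) * moranPhi G S
        + (if x ∈ S then r else 1) / (moranW r S * G.degree x) *
          (if x ∈ S then (if y ∈ S then 0 else 1 / (G.degree y : ℝ))
            else (if y ∈ S then -(1 / (G.degree y : ℝ)) else 0)) := by
    intro x _ y _
    rw [← mul_add]
    congr 1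
    by_cases hx : x ∈ S <;> by_cases hy : y ∈ S
    · simp only [hx, hy, if_true]
      rw [Finset.insert_eq_self.2 hy]; ring
    · simp only [hx, hy, if_true, if_false]
      unfold moranPhi
      rw [Finset.sum_insert hy]; ring
    · simp only [hx, hy, if_false, if_true]
      unfold moranPhi
      rw [Finset.sum_erase_eq_sub hy]; ring
    · simp only [hx, hy, if_false]
      rw [Finset.erase_eq_of_notMem hy]; ring
  rw [Finset.sum_congr rfl (fun x hx => Finset.sum_congr rfl (hnext x hx))]
  simp only [Finset.sum_add_distrib]
  have hc1 : ∑ x : V, ∑ y ∈ G.neighborFinset x,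
      (if x ∈ S then r else 1) / (moranW r S * G.degree x) * moranPhi G S
      = moranPhi G S := by
    simp only [← Finset.sum_mul]
    rw [moran_csum G hr0 hn1 hd S, one_mul]
  rw [hc1]
  -- now bound the drift term D
  have hD : ∑ x : V, ∑ y ∈ G.neighborFinset x,
      (if x ∈ S then r else 1) / (moranW r S * G.degree x) *
        (if x ∈ S then (if y ∈ S then 0 else 1 / (G.degree y : ℝ))
          else (if y ∈ S then -(1 / (G.degree y : ℝ)) else 0))
      ≤ -((1 - r) / (Fintype.card V : ℝ) ^ 3) := by
    -- extend inner sum to all of V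
    have hext : ∀ x : V, (∑ y ∈ G.neighborFinset x,
        (if x ∈ S then r else 1) / (moranW r S * G.degree x) *
          (if x ∈ S then (if y ∈ S then 0 else 1 / (G.degree y : ℝ))
            else (if y ∈ S then -(1 / (G.degree y : ℝ)) else 0)))
        = ∑ y : V, (if y ∈ G.neighborFinset x then
            (if x ∈ S then r else 1) / (moranW r S * G.degree x) *
              (if x ∈ S then (if y ∈ S then 0 else 1 / (G.degree y : ℝ))
                else (if y ∈ S then -(1 / (G.degree y : ℝ)) else 0)) else 0) := by
      intro x
      rw [Finset.sum_ite_mem, Finset.univ_inter]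
    simp only [hext]
    -- pointwise rewrite into boundary-indicator form
    have hpt : ∀ x y : V, (if y ∈ G.neighborFinset x then
        (if x ∈ S then r else 1) / (moranW r S * G.degree x) *
          (if x ∈ S then (if y ∈ S then 0 else 1 / (G.degree y : ℝ))
            else (if y ∈ S then -(1 / (G.degree y : ℝ)) else 0)) else 0)
        = r * (if G.Adj x y ∧ x ∈ S ∧ y ∉ S then
            1 / (moranW r S * G.degree x * G.degree y) else 0)
          - (if G.Adj x y ∧ x ∉ S ∧ y ∈ S then
            1 / (moranW r S * G.degree x * G.degree y) else 0) := by
      intro x y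
      by_cases h1 : G.Adj x y
      · by_cases h2 : x ∈ S <;> by_cases h3 : y ∈ S <;>
          simp only [SimpleGraph.mem_neighborFinset, h1, h2, h3, if_true, if_false,
            not_true_eq_false, not_false_eq_true, true_and, and_true, false_and, and_false] <;>
          ring
      · simp [SimpleGraph.mem_neighborFinset, h1]
    simp only [hpt]
    simp only [Finset.sum_sub_distrib, ← Finset.mul_sum]
    have hBA : (∑ x : V, ∑ y : V, if G.Adj x y ∧ x ∉ S ∧ y ∈ S then
          1 / (moranW r S * G.degree x * G.degree y) else 0)
        = ∑ x : V, ∑ y : V, if G.Adj x y ∧ x ∈ S ∧ y ∉ S then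
            1 / (moranW r S * G.degree x * G.degree y) else 0 := by
      rw [Finset.sum_comm]
      refine Finset.sum_congr rfl fun a _ => Finset.sum_congr rfl fun b _ => ?_
      by_cases h1 : G.Adj a b
      · have h1' : G.Adj b a := h1.symm
        by_cases h2 : a ∈ S <;> by_cases h3 : b ∈ S <;>
          simp only [h1, h1', h2, h3, if_true, if_false, not_true_eq_false,
            not_false_eq_true, true_and, and_true, false_and, and_false] <;> ring
      · have h1' : ¬ G.Adj b a := fun hh => h1 hh.symm
        simp [h1, h1']
    have hnonneg : ∀ x y : V, (0:ℝ) ≤ (if G.Adj x y ∧ x ∈ S ∧ y ∉ S then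
        1 / (moranW r S * G.degree x * G.degree y) else 0) := by
      intro x y
      split_ifs
      · exact div_nonneg zero_le_one
          (mul_nonneg (mul_nonneg hW.le (Nat.cast_nonneg _)) (Nat.cast_nonneg _))
      · exact le_refl 0
    have hA : (1:ℝ) / (Fintype.card V : ℝ) ^ 3
        ≤ ∑ x : V, ∑ y : V, if G.Adj x y ∧ x ∈ S ∧ y ∉ S then
            1 / (moranW r S * G.degree x * G.degree y) else 0 := by
      have hdu : (G.degree u : ℝ) ≤ (Fintype.card V : ℝ) := by
        exact_mod_cast (G.degree_lt_card_verts u).le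
      have hdv : (G.degree v : ℝ) ≤ (Fintype.card V : ℝ) := by
        exact_mod_cast (G.degree_lt_card_verts v).le
      have hdu0 : (0:ℝ) < (G.degree u : ℝ) := by exact_mod_cast hd u
      have hdv0 : (0:ℝ) < (G.degree v : ℝ) := by exact_mod_cast hd v
      have hpos : (0:ℝ) < moranW r S * G.degree u * G.degree v :=
        mul_pos (mul_pos hW hdu0) hdv0
      have hWle := moranW_le (V := V) hr1 S
      have hterm : (1:ℝ) / (Fintype.card V : ℝ) ^ 3
          ≤ (if G.Adj u v ∧ u ∈ S ∧ v ∉ S then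
              1 / (moranW r S * G.degree u * G.degree v) else 0) := by
        rw [if_pos ⟨huv, hu, hv⟩]
        refine one_div_le_one_div_of_le hpos ?_
        have hn0 : (0:ℝ) ≤ (Fintype.card V : ℝ) := Nat.cast_nonneg _
        have h1 : moranW r S * (G.degree u : ℝ) ≤ (Fintype.card V : ℝ) * (Fintype.card V : ℝ) :=
          mul_le_mul hWle hdu hdu0.le hn0
        have h2 : moranW r S * (G.degree u : ℝ) * (G.degree v : ℝ)
            ≤ (Fintype.card V : ℝ) * (Fintype.card V : ℝ) * (Fintype.card V : ℝ) :=
          mul_le_mul h1 hdv hdv0.le (mul_nonneg hn0 hn0)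
        nlinarith [h2]
      have step1 : (if G.Adj u v ∧ u ∈ S ∧ v ∉ S then
          1 / (moranW r S * G.degree u * G.degree v) else 0)
          ≤ ∑ y : V, if G.Adj u y ∧ u ∈ S ∧ y ∉ S then
            1 / (moranW r S * G.degree u * G.degree y) else 0 :=
        Finset.single_le_sum (f := fun y : V => if G.Adj u y ∧ u ∈ S ∧ y ∉ S then
          1 / (moranW r S * G.degree u * G.degree y) else 0)
          (fun y _ => hnonneg u y) (Finset.mem_univ v)
      have step2 : (∑ y : V, if G.Adj u y ∧ u ∈ S ∧ y ∉ S then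
            1 / (moranW r S * G.degree u * G.degree y) else 0)
          ≤ ∑ x : V, ∑ y : V, if G.Adj x y ∧ x ∈ S ∧ y ∉ S then
            1 / (moranW r S * G.degree x * G.degree y) else 0 :=
        Finset.single_le_sum (f := fun x : V => ∑ y : V,
          if G.Adj x y ∧ x ∈ S ∧ y ∉ S then
            1 / (moranW r S * G.degree x * G.degree y) else 0)
          (fun x _ => Finset.sum_nonneg fun y _ => hnonneg x y) (Finset.mem_univ u)
      exact hterm.trans (step1.trans step2)
    rw [hBA]
    have hdiv : (1 - r) / (Fintype.card V : ℝ) ^ 3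
        = (1 - r) * ((1:ℝ) / (Fintype.card V : ℝ) ^ 3) := by ring
    nlinarith [hA, hdiv]
  linarith [hD]

lemma moran_trans_pos {r : ℝ} (hr0 : 0 < r) (hn : 1 ≤ Fintype.card V)
    (hd : ∀ x, 0 < G.degree x) (S : Finset V) {u v : V}
    (hu : u ∈ S) (hv : v ∉ S) (huv : G.Adj u v) :
    0 < moranP G r S (S.erase u) := by
  have hW := moranW_pos (V := V) hr0 hn S
  have hdv0 : (0:ℝ) < (G.degree v : ℝ) := by exact_mod_cast hd v
  have htnn : ∀ x : V, ∀ y ∈ G.neighborFinset x,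
      (0:ℝ) ≤ (if x ∈ S then r else 1) / (moranW r S * G.degree x) *
        (if (if x ∈ S then insert y S else S.erase y) = S.erase u then (1:ℝ) else 0) := by
    intro x y _
    have h1 : (0:ℝ) ≤ (if x ∈ S then r else 1) := by split_ifs; exact hr0.le; exact zero_le_one
    have h2 : (0:ℝ) ≤ moranW r S * G.degree x := mul_nonneg hW.le (Nat.cast_nonneg _)
    have h3 : (0:ℝ) ≤ (if (if x ∈ S then insert y S else S.erase y) = S.erase u
        then (1:ℝ) else 0) := by split_ifs <;> norm_num
    exact mul_nonneg (div_nonneg h1 h2) h3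
  have hterm : (0:ℝ) < (if v ∈ S then r else 1) / (moranW r S * G.degree v) *
      (if (if v ∈ S then insert u S else S.erase u) = S.erase u then (1:ℝ) else 0) := by
    rw [if_neg hv, if_neg hv, if_pos rfl, mul_one]
    exact div_pos one_pos (mul_pos hW hdv0)
  have step1 : (if v ∈ S then r else 1) / (moranW r S * G.degree v) *
      (if (if v ∈ S then insert u S else S.erase u) = S.erase u then (1:ℝ) else 0)
      ≤ ∑ y ∈ G.neighborFinset v,
        (if v ∈ S then r else 1) / (moranW r S * G.degree v) *
          (if (if v ∈ S then insert y S else S.erase y) = S.erase u then (1:ℝ) else 0) :=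
    Finset.single_le_sum (fun y hy => htnn v y hy)
      ((SimpleGraph.mem_neighborFinset G v u).2 huv.symm)
  have step2 : (∑ y ∈ G.neighborFinset v,
        (if v ∈ S then r else 1) / (moranW r S * G.degree v) *
          (if (if v ∈ S then insert y S else S.erase y) = S.erase u then (1:ℝ) else 0))
      ≤ moranP G r S (S.erase u) := by
    unfold moranP
    exact Finset.single_le_sum (f := fun x : V => ∑ y ∈ G.neighborFinset x,
        (if x ∈ S then r else 1) / (moranW r S * G.degree x) *
          (if (if x ∈ S then insert y S else S.erase y) = S.erase u then (1:ℝ) else 0))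
      (fun x _ => Finset.sum_nonneg fun y hy => htnn x y hy) (Finset.mem_univ v)
  exact hterm.trans_le (step1.trans step2)

end moranAux

/-- For a finite connected graph on `n ≥ 2` vertices and `0 < r < 1`, the expected
absorption time of the Moran process with a uniformly random initial mutant is at most
`n³/(1-r)`.  Here `h S` is the expected absorption time started from mutant set `S`,
characterised as a nonnegative solution of the standard hitting-time recurrence. -/
theorem stmt_9 {V : Type*} [Fintype V] [DecidableEq V] (G : SimpleGraph V)
    [DecidableRel G.Adj] (hG : G.Connected) (hn : 2 ≤ Fintype.card V)
    (r : ℝ) (hr0 : 0 < r) (hr1 : r < 1)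
    (h : Finset V → ℝ) (hpos : ∀ S, 0 ≤ h S)
    (habs0 : h ∅ = 0) (habs1 : h Finset.univ = 0)
    (hrec : ∀ S : Finset V, S ≠ ∅ → S ≠ Finset.univ →
      h S = 1 + ∑ T : Finset V, moranP G r S T * h T) :
    (1 / (Fintype.card V : ℝ)) * ∑ x : V, h {x} ≤ (Fintype.card V : ℝ) ^ 3 / (1 - r) := by
  have hn1 : 1 ≤ Fintype.card V := by omega
  have hd : ∀ x, 0 < G.degree x := moran_degree_pos G hG hn
  have hr1' : (0:ℝ) < 1 - r := by linarith
  have hn0 : (0:ℝ) < (Fintype.card V : ℝ) := by exact_mod_cast hn1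
  set c : ℝ := (Fintype.card V : ℝ) ^ 3 / (1 - r) with hc
  have hc0 : 0 ≤ c := div_nonneg (by positivity) hr1'.le
  set g : Finset V → ℝ := fun S => c * moranPhi G S with hg
  have hphinn : ∀ S : Finset V, 0 ≤ moranPhi G S := fun S =>
    Finset.sum_nonneg fun x _ => by positivity
  have key : ∀ S : Finset V, h S ≤ g S := by
    obtain ⟨S₀, -, hS₀⟩ := Finset.exists_max_image (univ : Finset (Finset V))
      (fun S => h S - g S) ⟨∅, Finset.mem_univ _⟩
    set M := h S₀ - g S₀ with hM
    have hmax : ∀ S : Finset V, h S - g S ≤ M := fun S => hS₀ S (Finset.mem_univ S)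
    suffices hM0 : M ≤ 0 by intro S; have := hmax S; linarith
    by_contra hMpos
    push_neg at hMpos
    obtain ⟨S₁, hS₁mem, hS₁min⟩ := Finset.exists_min_image
      ((univ : Finset (Finset V)).filter (fun S => h S - g S = M)) Finset.card
      ⟨S₀, by simp [hM]⟩
    rw [Finset.mem_filter] at hS₁mem
    have hS₁eq : h S₁ - g S₁ = M := hS₁mem.2
    have hgempty : g ∅ = 0 := by simp [hg, moranPhi]
    have hS₁ne : S₁ ≠ ∅ := by
      rintro rfl
      rw [habs0, hgempty] at hS₁eq
      linarith
    have hS₁nu : S₁ ≠ univ := by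
      rintro rfl
      rw [habs1] at hS₁eq
      have hgu : 0 ≤ g univ := mul_nonneg hc0 (hphinn univ)
      linarith
    obtain ⟨u, hu, v, hv, huv⟩ := moran_exists_boundary G hG hS₁ne hS₁nu
    have hPpos : 0 < moranP G r S₁ (S₁.erase u) :=
      moran_trans_pos G hr0 hn1 hd S₁ hu hv huv
    have hT₀lt : (S₁.erase u).card < S₁.card := Finset.card_erase_lt_of_mem hu
    have hdT₀ : h (S₁.erase u) - g (S₁.erase u) < M := by
      rcases (hmax (S₁.erase u)).lt_or_eq with hlt | heq
      · exact hlt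
      · exfalso
        have hmem : S₁.erase u ∈ (univ : Finset (Finset V)).filter
            (fun S => h S - g S = M) := by
          rw [Finset.mem_filter]; exact ⟨Finset.mem_univ _, heq⟩
        have := hS₁min _ hmem
        omega
    have hdrift := moran_drift G hG hn hr0 hr1 S₁ hS₁ne hS₁nu
    have hone : c * ((1 - r) / (Fintype.card V : ℝ) ^ 3) = 1 := by
      rw [hc]; field_simp
    have hgsup : ∑ T : Finset V, moranP G r S₁ T * g T ≤ g S₁ - 1 := by
      have hrw : ∑ T : Finset V, moranP G r S₁ T * g T
          = c * ∑ T : Finset V, moranP G r S₁ T * moranPhi G T := by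
        rw [Finset.mul_sum]
        exact Finset.sum_congr rfl fun T _ => by simp only [hg]; ring
      rw [hrw]
      calc c * ∑ T : Finset V, moranP G r S₁ T * moranPhi G T
          ≤ c * (moranPhi G S₁ - (1 - r) / (Fintype.card V : ℝ) ^ 3) :=
            mul_le_mul_of_nonneg_left hdrift hc0
        _ = g S₁ - 1 := by rw [mul_sub, hone]
    have hhrec := hrec S₁ hS₁ne hS₁nu
    have hrow := moran_rowsum G hr0 hn1 hd S₁
    have hPnn : ∀ T : Finset V, 0 ≤ moranP G r S₁ T := fun T =>
      moranP_nonneg G hr0 hn1 S₁ T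
    have hbound : ∑ T : Finset V, moranP G r S₁ T * (h T - g T) < M := by
      have hsplit : ∑ T : Finset V, moranP G r S₁ T * (h T - g T)
          = moranP G r S₁ (S₁.erase u) * (h (S₁.erase u) - g (S₁.erase u))
            + ∑ T ∈ (univ : Finset (Finset V)).erase (S₁.erase u),
                moranP G r S₁ T * (h T - g T) :=
        (Finset.add_sum_erase _ (fun T => moranP G r S₁ T * (h T - g T))
          (Finset.mem_univ (S₁.erase u))).symm
      have hsplit2 : moranP G r S₁ (S₁.erase u) * M
            + ∑ T ∈ (univ : Finset (Finset V)).erase (S₁.erase u),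
                moranP G r S₁ T * M
          = ∑ T : Finset V, moranP G r S₁ T * M :=
        Finset.add_sum_erase _ (fun T => moranP G r S₁ T * M) (Finset.mem_univ (S₁.erase u))
      have h1 : moranP G r S₁ (S₁.erase u) * (h (S₁.erase u) - g (S₁.erase u))
          < moranP G r S₁ (S₁.erase u) * M := by
        exact mul_lt_mul_of_pos_left hdT₀ hPpos
      have h2 : ∑ T ∈ (univ : Finset (Finset V)).erase (S₁.erase u),
            moranP G r S₁ T * (h T - g T)
          ≤ ∑ T ∈ (univ : Finset (Finset V)).erase (S₁.erase u),
            moranP G r S₁ T * M :=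
        Finset.sum_le_sum fun T _ => mul_le_mul_of_nonneg_left (hmax T) (hPnn T)
      have h3 : ∑ T : Finset V, moranP G r S₁ T * M = M := by
        rw [← Finset.sum_mul, hrow, one_mul]
      rw [hsplit]
      calc moranP G r S₁ (S₁.erase u) * (h (S₁.erase u) - g (S₁.erase u))
            + ∑ T ∈ (univ : Finset (Finset V)).erase (S₁.erase u),
                moranP G r S₁ T * (h T - g T)
          < moranP G r S₁ (S₁.erase u) * M
            + ∑ T ∈ (univ : Finset (Finset V)).erase (S₁.erase u),
                moranP G r S₁ T * M := by
            exact add_lt_add_of_lt_of_le h1 h2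
        _ = M := by rw [hsplit2, h3]
    have hMM : M < M := by
      have e1 : ∑ T : Finset V, moranP G r S₁ T * (h T - g T)
          = (∑ T : Finset V, moranP G r S₁ T * h T)
            - ∑ T : Finset V, moranP G r S₁ T * g T := by
        rw [← Finset.sum_sub_distrib]
        exact Finset.sum_congr rfl fun T _ => by ring
      have := hS₁eq
      rw [hhrec] at this
      linarith [hbound, hgsup, e1.le, e1.ge]
    exact absurd hMM (lt_irrefl M)
  have hsing : ∀ x : V, h {x} ≤ c := by
    intro x
    have hk := key {x}
    have hphix : moranPhi G {x} = 1 / (G.degree x : ℝ) := Finset.sum_singleton _ _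
    have hdeg1 : (1:ℝ) ≤ (G.degree x : ℝ) := by exact_mod_cast hd x
    have hle1 : (1:ℝ) / (G.degree x : ℝ) ≤ 1 := by
      rw [div_le_one (by linarith)]; linarith
    calc h {x} ≤ g {x} := hk
      _ = c * (1 / (G.degree x : ℝ)) := by rw [hg]; simp only []; rw [hphix]
      _ ≤ c * 1 := mul_le_mul_of_nonneg_left hle1 hc0
      _ = c := mul_one c
  have hsum : ∑ x : V, h {x} ≤ (Fintype.card V : ℝ) * c := by
    calc ∑ x : V, h {x} ≤ ∑ _x : V, c := Finset.sum_le_sum fun x _ => hsing x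
      _ = (Fintype.card V : ℝ) * c := by
        rw [Finset.sum_const, Finset.card_univ, nsmul_eq_mul]
  calc (1 / (Fintype.card V : ℝ)) * ∑ x : V, h {x}
      ≤ (1 / (Fintype.card V : ℝ)) * ((Fintype.card V : ℝ) * c) :=
        mul_le_mul_of_nonneg_left hsum (by positivity)
    _ = c := by field_simp
    _ = (Fintype.card V : ℝ) ^ 3 / (1 - r) := hc
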